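/- arXiv:2206.14795 — 2 statements merged into one kernel-verified Lean document; each statement's English description precedes it below -/
import Mathlib

section
/- Let A be a commutative ring and π ∈ A a non-zero-divisor. Let M ∈ D(A) be derived π-adically complete. If M ⊗^L_A A/π is concentrated in cohomological degrees ≤ −2, then M is concentrated in cohomological degrees ≤ −1. -/
open CategoryTheory CategoryTheory.Limits

/-- The map `∏_{n∈ℕ} M → ∏_{n∈ℕ} M`, `(xₙ)ₙ ↦ (xₙ − π·x_{n+1})ₙ`. -/
noncomputable def towerMap (A : Type) [CommRing A] (π : A)
    (M : CochainComplex (ModuleCat.{0} A) ℤ) :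
    (∏ᶜ fun _ : ℕ => M) ⟶ (∏ᶜ fun _ : ℕ => M) :=
  Pi.lift fun n => Pi.π (fun _ : ℕ => M) n - π • Pi.π (fun _ : ℕ => M) (n + 1)

/-- The derived limit `Rlim(⋯ →^π M →^π M)`, realized by the standard model for derived limits
of `ℕ`-indexed towers: the shifted mapping cone of `(xₙ)ₙ ↦ (xₙ − π·x_{n+1})ₙ`. -/
noncomputable def Rlim (A : Type) [CommRing A] (π : A)
    (M : CochainComplex (ModuleCat.{0} A) ℤ) : CochainComplex (ModuleCat.{0} A) ℤ :=
  (CochainComplex.mappingCone (towerMap A π M))⟦(-1 : ℤ)⟧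

/-- `M` is derived `π`-adically complete: `Rlim(⋯ →^π M →^π M) ≃ 0` in `D(A)`,
i.e. this complex is acyclic. -/
def IsDerivedPiComplete (A : Type) [CommRing A] (π : A)
    (M : CochainComplex (ModuleCat.{0} A) ℤ) : Prop :=
  ∀ i : ℤ, IsZero ((Rlim A π M).homology i)

/-- The mapping cone of multiplication by `π` on `M`, computing `M ⊗^L_A A/π`. -/
noncomputable def derivedModCone (A : Type) [CommRing A] (x : A)
    (M : CochainComplex (ModuleCat.{0} A) ℤ) : CochainComplex (ModuleCat.{0} A) ℤ :=
  CochainComplex.mappingCone (x • 𝟙 M)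

section Aux

open HomologicalComplex

variable {A : Type} [CommRing A]

/-- Elementwise exactness from vanishing homology. -/
lemma aux_exact_elem (C : CochainComplex (ModuleCat.{0} A) ℤ) (i j k : ℤ)
    (hij : i + 1 = j) (hjk : j + 1 = k)
    (hC : IsZero (C.homology j)) (x : C.X j) (hx : C.d j k x = 0) :
    ∃ y : C.X i, C.d i j y = x := by
  have h1 : C.ExactAt j := (C.exactAt_iff_isZero_homology j).2 hC
  rw [C.exactAt_iff' i j k (by simp [CochainComplex.prev]; omega)
    (by simp [CochainComplex.next]; omega)] at h1
  rw [ShortComplex.moduleCat_exact_iff] at h1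
  exact h1 x hx

/-- If the cone of `π` on `M` has vanishing homology in degree `j`, then `π` is surjective
on `H^j(M)`, elementwise. -/
lemma aux_pi_surj (π : A) (M : CochainComplex (ModuleCat.{0} A) ℤ) (i j k : ℤ)
    (hij : i + 1 = j) (hjk : j + 1 = k)
    (hC : IsZero ((derivedModCone A π M).homology j))
    (z : M.X j) (hz : M.d j k z = 0) :
    ∃ (a : M.X j) (w : M.X i), M.d j k a = 0 ∧ π • a + M.d i j w = z := by
  set φ := π • 𝟙 M with hφ
  have hRij : (ComplexShape.up ℤ).Rel i j := hij
  have hRjk : (ComplexShape.up ℤ).Rel j k := hjk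
  set C := CochainComplex.mappingCone φ with hCdef
  have hc : C.d j k (HomologicalComplex.homotopyCofiber.inrX φ j z) = 0 := by
    have h0 : C.d j k (HomologicalComplex.homotopyCofiber.inrX φ j z)
        = HomologicalComplex.homotopyCofiber.inrX φ k (M.d j k z) :=
      congrArg (fun (f : M.X j ⟶ C.X k) => f z) (HomologicalComplex.homotopyCofiber.inrX_d φ j k)
    rw [h0, hz, map_zero]; rfl
  obtain ⟨b, hb⟩ := aux_exact_elem C i j k hij hjk hC _ hc
  refine ⟨HomologicalComplex.homotopyCofiber.fstX φ i j hRij b, HomologicalComplex.homotopyCofiber.sndX φ i b, ?_, ?_⟩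
  · have h0 : HomologicalComplex.homotopyCofiber.fstX φ j k hRjk (C.d i j b)
        = -(M.d j k (HomologicalComplex.homotopyCofiber.fstX φ i j hRij b)) :=
      congrArg (fun (f : C.X i ⟶ M.X k) => f b)
        (HomologicalComplex.homotopyCofiber.d_fstX φ i j k hRij hRjk)
    rw [hb] at h0
    have h2 : HomologicalComplex.homotopyCofiber.fstX φ j k hRjk (HomologicalComplex.homotopyCofiber.inrX φ j z) = 0 :=
      congrArg (fun (f : M.X j ⟶ M.X k) => f z) (HomologicalComplex.homotopyCofiber.inrX_fstX φ j k hRjk)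
    rw [h2] at h0
    exact (neg_eq_zero.mp h0.symm)
  · have h0 : HomologicalComplex.homotopyCofiber.sndX φ j (C.d i j b)
        = π • HomologicalComplex.homotopyCofiber.fstX φ i j hRij b
          + M.d i j (HomologicalComplex.homotopyCofiber.sndX φ i b) :=
      congrArg (fun (f : C.X i ⟶ M.X j) => f b) (HomologicalComplex.homotopyCofiber.d_sndX φ i j hRij)
    rw [hb] at h0
    have h2 : HomologicalComplex.homotopyCofiber.sndX φ j (HomologicalComplex.homotopyCofiber.inrX φ j z) = z :=
      congrArg (fun (f : M.X j ⟶ M.X j) => f z) (HomologicalComplex.homotopyCofiber.inrX_sndX φ j)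
    rw [h2] at h0
    exact h0.symm

/-- The `j`-th component of the countable product complex, as a concrete pi-type module. -/
noncomputable def auxProdIso (M : CochainComplex (ModuleCat.{0} A) ℤ) (j : ℤ) :
    ((∏ᶜ fun _ : ℕ => M : CochainComplex (ModuleCat.{0} A) ℤ).X j)
      ≅ ModuleCat.of A (∀ _ : ℕ, M.X j) :=
  PreservesProduct.iso (HomologicalComplex.eval (ModuleCat.{0} A) (ComplexShape.up ℤ) j)
    (fun _ : ℕ => M) ≪≫ ModuleCat.piIsoPi (fun _ : ℕ => M.X j)

lemma auxProdIso_spec (M : CochainComplex (ModuleCat.{0} A) ℤ) (j : ℤ)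
    (x : ((∏ᶜ fun _ : ℕ => M : CochainComplex (ModuleCat.{0} A) ℤ).X j)) (n : ℕ) :
    (Pi.π (fun _ : ℕ => M) n).f j x = ((auxProdIso M j).hom x) n := by
  have h1 : piComparison (HomologicalComplex.eval (ModuleCat.{0} A) (ComplexShape.up ℤ) j)
      (fun _ : ℕ => M) ≫ Pi.π _ n = (Pi.π (fun _ : ℕ => M) n).f j :=
    piComparison_comp_π _ _ n
  have h2 := ModuleCat.piIsoPi_hom_ker_subtype (fun _ : ℕ => M.X j) n
  have h3 : (Pi.π (fun _ : ℕ => M) n).f j x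
      = Pi.π (fun _ : ℕ => M.X j) n
        (piComparison (HomologicalComplex.eval (ModuleCat.{0} A) (ComplexShape.up ℤ) j)
          (fun _ : ℕ => M) x) := (congrArg (fun f => f x) h1).symm
  have h5 : (auxProdIso M j).hom x
      = (ModuleCat.piIsoPi fun _ : ℕ => M.X j).hom
        (piComparison (HomologicalComplex.eval (ModuleCat.{0} A) (ComplexShape.up ℤ) j)
          (fun _ : ℕ => M) x) :=
    congrArg (fun g => (ModuleCat.piIsoPi fun _ : ℕ => M.X j).hom (g x))
      (PreservesProduct.iso_hom (HomologicalComplex.eval (ModuleCat.{0} A)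
        (ComplexShape.up ℤ) j) (fun _ : ℕ => M))
  have h6 := congrArg (fun f => f (piComparison
      (HomologicalComplex.eval (ModuleCat.{0} A) (ComplexShape.up ℤ) j)
      (fun _ : ℕ => M) x)) h2
  rw [h3, h5]
  exact h6.symm

lemma aux_prod_mk (M : CochainComplex (ModuleCat.{0} A) ℤ) (j : ℤ)
    (g : ∀ _ : ℕ, M.X j) (n : ℕ) :
    (Pi.π (fun _ : ℕ => M) n).f j ((auxProdIso M j).inv g) = g n := by
  rw [auxProdIso_spec]
  have : (auxProdIso M j).hom ((auxProdIso M j).inv g) = g :=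
    congrArg (fun f => f g) (auxProdIso M j).inv_hom_id
  rw [this]

lemma aux_prod_ext (M : CochainComplex (ModuleCat.{0} A) ℤ) (j : ℤ)
    (x y : ((∏ᶜ fun _ : ℕ => M : CochainComplex (ModuleCat.{0} A) ℤ).X j))
    (hxy : ∀ n, (Pi.π (fun _ : ℕ => M) n).f j x = (Pi.π (fun _ : ℕ => M) n).f j y) :
    x = y := by
  have h1 : (auxProdIso M j).hom x = (auxProdIso M j).hom y := by
    funext n
    rw [← auxProdIso_spec, ← auxProdIso_spec]
    exact hxy n
  have h2 : ∀ t, (auxProdIso M j).inv ((auxProdIso M j).hom t) = t := fun t =>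
    congrArg (fun f => f t) (auxProdIso M j).hom_inv_id
  rw [← h2 x, ← h2 y, h1]

lemma aux_shift_isZero (K : CochainComplex (ModuleCat.{0} A) ℤ) (i : ℤ)
    (hK : IsZero ((K⟦(-1:ℤ)⟧).homology i)) : IsZero (K.homology (i - 1)) := by
  have e := (CochainComplex.ShiftSequence.shiftIso (ModuleCat.{0} A) (-1) i (i - 1)
    (by omega)).app K
  exact hK.of_iso e.symm

end Aux

/-- Let `A` be a commutative ring, `π ∈ A` a non-zero-divisor, and `M ∈ D(A)`
derived `π`-adically complete. If `M ⊗^L_A A/π` is concentrated in cohomological degrees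
`≤ -2`, then `M` is concentrated in cohomological degrees `≤ -1`. -/
theorem stmt_7 (A : Type) [CommRing A] (π : A) (hπ : π ∈ nonZeroDivisors A)
    (M : CochainComplex (ModuleCat.{0} A) ℤ)
    (hcplt : IsDerivedPiComplete A π M)
    (h : ∀ i : ℤ, -2 < i → IsZero ((derivedModCone A π M).homology i)) :
    ∀ i : ℤ, -1 < i → IsZero (M.homology i) := by
  intro i hi
  rw [← HomologicalComplex.exactAt_iff_isZero_homology,
    M.exactAt_iff' (i-1) i (i+1) (by simp [CochainComplex.prev])
      (by simp [CochainComplex.next]),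
    ShortComplex.moduleCat_exact_iff]
  intro z hz
  -- hz : M.d i (i+1) z = 0 (definitionally)
  have hz' : M.d i (i+1) z = 0 := hz
  -- Step 1: recursively lift along π using surjectivity of π on H^i(M).
  set S := {z : M.X i // M.d i (i+1) z = 0} with hS
  have step : ∀ s : S, ∃ t : S × (M.X (i-1)),
      π • (t.1 : M.X i) + M.d (i-1) i t.2 = (s : M.X i) := by
    rintro ⟨z0, hz0⟩
    obtain ⟨a, w, ha, haw⟩ := aux_pi_surj π M (i-1) i (i+1) (by omega) rfl
      (h i (by omega)) z0 hz0
    exact ⟨⟨⟨a, ha⟩, w⟩, haw⟩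
  choose f hf using step
  set zs : ℕ → S := fun n => (fun s => (f s).1)^[n] ⟨z, hz'⟩ with hzsdef
  have hzs : ∀ n : ℕ, π • ((zs (n+1) : S) : M.X i)
      + M.d (i-1) i (f (zs n)).2 = ((zs n : S) : M.X i) := by
    intro n
    have hsucc : zs (n+1) = (f (zs n)).1 := Function.iterate_succ_apply' _ n _
    rw [hsucc]
    exact hf (zs n)
  -- Step 2: assemble into the product complex.
  set Z : ((∏ᶜ fun _ : ℕ => M : CochainComplex (ModuleCat.{0} A) ℤ).X i) :=
    (auxProdIso M i).inv (fun n => ((zs n : S) : M.X i)) with hZdef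
  set W : ((∏ᶜ fun _ : ℕ => M : CochainComplex (ModuleCat.{0} A) ℤ).X (i-1)) :=
    (auxProdIso M (i-1)).inv (fun n => (f (zs n)).2) with hWdef
  have hcomm : ∀ (a b : ℤ) (n : ℕ)
      (x : ((∏ᶜ fun _ : ℕ => M : CochainComplex (ModuleCat.{0} A) ℤ).X a)),
      (Pi.π (fun _ : ℕ => M) n).f b
          ((∏ᶜ fun _ : ℕ => M : CochainComplex (ModuleCat.{0} A) ℤ).d a b x)
        = M.d a b ((Pi.π (fun _ : ℕ => M) n).f a x) := by
    intro a b n x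
    exact (congrArg
      (fun (g : ((∏ᶜ fun _ : ℕ => M : CochainComplex (ModuleCat.{0} A) ℤ).X a) ⟶ M.X b) =>
        g x) ((Pi.π (fun _ : ℕ => M) n).comm a b)).symm
  have htower : ∀ (x : ((∏ᶜ fun _ : ℕ => M : CochainComplex (ModuleCat.{0} A) ℤ).X i))
      (n : ℕ), (Pi.π (fun _ : ℕ => M) n).f i ((towerMap A π M).f i x)
        = (Pi.π (fun _ : ℕ => M) n).f i x - π • (Pi.π (fun _ : ℕ => M) (n+1)).f i x := by
    intro x n
    have h0 : towerMap A π M ≫ Pi.π (fun _ : ℕ => M) n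
        = Pi.π (fun _ : ℕ => M) n - π • Pi.π (fun _ : ℕ => M) (n+1) := by
      simp [towerMap]
    exact congrArg (fun (g : _ ⟶ M) => g.f i x) h0
  have hdZ : (∏ᶜ fun _ : ℕ => M : CochainComplex (ModuleCat.{0} A) ℤ).d i (i+1) Z = 0 := by
    apply aux_prod_ext M (i+1)
    intro n
    rw [hcomm i (i+1) n Z, hZdef, aux_prod_mk, (zs n).2, map_zero]
  have hTW : (towerMap A π M).f i Z
      = (∏ᶜ fun _ : ℕ => M : CochainComplex (ModuleCat.{0} A) ℤ).d (i-1) i W := by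
    apply aux_prod_ext M i
    intro n
    rw [htower Z n, hcomm (i-1) i n W, hZdef, hWdef, aux_prod_mk, aux_prod_mk, aux_prod_mk]
    have := hzs n
    rw [sub_eq_iff_eq_add, ← this]
    abel
  -- Step 3: use acyclicity of the mapping cone of the tower map.
  set φ' := towerMap A π M with hφ'
  set C' := CochainComplex.mappingCone φ' with hC'def
  have hR0 : (ComplexShape.up ℤ).Rel (i-2) (i-1) := show i-2+1 = i-1 by omega
  have hR1 : (ComplexShape.up ℤ).Rel (i-1) i := show i-1+1 = i by omega
  have hR2 : (ComplexShape.up ℤ).Rel i (i+1) := rfl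
  have hsh : IsZero (C'.homology (i-1)) := by
    have h0 : IsZero (((CochainComplex.mappingCone
        (towerMap A π M))⟦(-1:ℤ)⟧).homology i) := hcplt i
    exact aux_shift_isZero (CochainComplex.mappingCone (towerMap A π M)) i h0
  set c : C'.X (i-1) := HomologicalComplex.homotopyCofiber.inlX φ' i (i-1) hR1 Z
      - HomologicalComplex.homotopyCofiber.inrX φ' (i-1) W with hcdef
  have hc : C'.d (i-1) i c = 0 := by
    have e1 : C'.d (i-1) i (HomologicalComplex.homotopyCofiber.inlX φ' i (i-1) hR1 Z)
        = -(HomologicalComplex.homotopyCofiber.inlX φ' (i+1) i hR2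
            ((∏ᶜ fun _ : ℕ => M : CochainComplex (ModuleCat.{0} A) ℤ).d i (i+1) Z))
          + HomologicalComplex.homotopyCofiber.inrX φ' i (φ'.f i Z) :=
      congrArg (fun (g : _ ⟶ C'.X i) => g Z)
        (HomologicalComplex.homotopyCofiber.inlX_d φ' (i-1) i (i+1) hR1 hR2)
    have e2 : C'.d (i-1) i (HomologicalComplex.homotopyCofiber.inrX φ' (i-1) W)
        = HomologicalComplex.homotopyCofiber.inrX φ' i
            ((∏ᶜ fun _ : ℕ => M : CochainComplex (ModuleCat.{0} A) ℤ).d (i-1) i W) :=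
      congrArg (fun (g : _ ⟶ C'.X i) => g W) (HomologicalComplex.homotopyCofiber.inrX_d φ' (i-1) i)
    erw [hcdef, map_sub, e1, e2, hdZ]
    have : φ'.f i Z = (∏ᶜ fun _ : ℕ => M : CochainComplex (ModuleCat.{0} A) ℤ).d (i-1) i W :=
      hTW
    rw [this]
    simp
    exact sub_self (HomologicalComplex.homotopyCofiber.inrX φ' i
      ((∏ᶜ fun _ : ℕ => M : CochainComplex (ModuleCat.{0} A) ℤ).d (i-1) i W))
  obtain ⟨b, hb⟩ := aux_exact_elem C' (i-2) (i-1) i (by omega) (by omega) hsh c hc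
  have e3 : HomologicalComplex.homotopyCofiber.fstX φ' (i-1) i hR1 (C'.d (i-2) (i-1) b)
      = -((∏ᶜ fun _ : ℕ => M : CochainComplex (ModuleCat.{0} A) ℤ).d (i-1) i
          (HomologicalComplex.homotopyCofiber.fstX φ' (i-2) (i-1) hR0 b)) :=
    congrArg (fun (g : C'.X (i-2) ⟶ _) => g b)
      (HomologicalComplex.homotopyCofiber.d_fstX φ' (i-2) (i-1) i hR0 hR1)
  rw [hb] at e3
  have e4 : HomologicalComplex.homotopyCofiber.fstX φ' (i-1) i hR1 c = Z := by
    have e5 : HomologicalComplex.homotopyCofiber.fstX φ' (i-1) i hR1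
        (HomologicalComplex.homotopyCofiber.inlX φ' i (i-1) hR1 Z) = Z :=
      congrArg (fun (g : ((∏ᶜ fun _ : ℕ => M : CochainComplex (ModuleCat.{0} A) ℤ).X i) ⟶ ((∏ᶜ fun _ : ℕ => M : CochainComplex (ModuleCat.{0} A) ℤ).X i)) => g Z)
        (HomologicalComplex.homotopyCofiber.inlX_fstX φ' i (i-1) hR1)
    have e6 : HomologicalComplex.homotopyCofiber.fstX φ' (i-1) i hR1
        (HomologicalComplex.homotopyCofiber.inrX φ' (i-1) W) = 0 :=
      congrArg (fun (g : ((∏ᶜ fun _ : ℕ => M : CochainComplex (ModuleCat.{0} A) ℤ).X (i-1)) ⟶ ((∏ᶜ fun _ : ℕ => M : CochainComplex (ModuleCat.{0} A) ℤ).X i)) => g W)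
        (HomologicalComplex.homotopyCofiber.inrX_fstX φ' (i-1) i hR1)
    rw [hcdef, map_sub, e5, e6, sub_zero]
  rw [e4] at e3
  -- Step 4: project to the 0-th component.
  refine ⟨-((Pi.π (fun _ : ℕ => M) 0).f (i-1)
    (HomologicalComplex.homotopyCofiber.fstX φ' (i-2) (i-1) hR0 b)), ?_⟩
  show M.d (i-1) i _ = z
  rw [map_neg, ← hcomm (i-1) i 0,
    ← map_neg (ConcreteCategory.hom ((Pi.π (fun _ : ℕ => M) 0).f i)), ← e3, hZdef, aux_prod_mk]
  rfl
end

section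
/- Let A be a commutative ring and B a finitely presented flat A-algebra. Then there exist sets I and J and an exact sequence of A-modules 0 → A^{(I)} → A^{(J)} → B → 0, i.e., B has a free resolution of length 1 by (possibly infinite rank) free A-modules. -/
set_option maxSynthPendingDepth 2
open Function LinearMap Submodule
namespace RG
noncomputable section
variable (A : Type) [CommRing A]
def ι (m : ℕ) : (Fin m →₀ A) →ₗ[A] (ℕ →₀ A) := Finsupp.lmapDomain A A (Fin.val)
def castm {m m' : ℕ} (h : m ≤ m') : (Fin m →₀ A) →ₗ[A] (Fin m' →₀ A) :=
  Finsupp.lmapDomain A A (Fin.castLE h)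
theorem ι_inj (m : ℕ) : Injective (ι A m) := Finsupp.mapDomain_injective (Fin.val_injective)
theorem ι_castm {m m' : ℕ} (h : m ≤ m') (p : Fin m →₀ A) :
    ι A m' (castm A h p) = ι A m p := by
  simp only [ι, castm, Finsupp.lmapDomain_apply]; rw [← Finsupp.mapDomain_comp]; rfl
theorem castm_castm {m m' m'' : ℕ} (h : m ≤ m') (h' : m' ≤ m'') (p : Fin m →₀ A) :
    castm A h' (castm A h p) = castm A (h.trans h') p := by
  simp only [castm, Finsupp.lmapDomain_apply]; rw [← Finsupp.mapDomain_comp]; rfl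
theorem castm_rfl {m : ℕ} (h : m ≤ m) (p : Fin m →₀ A) : castm A h p = p := by
  simp only [castm, Finsupp.lmapDomain_apply]
  have : (Fin.castLE h) = id := by funext i; rfl
  rw [this, Finsupp.mapDomain_id]
theorem mem_range_ι {q : ℕ →₀ A} {M : ℕ} (h : ∀ i ∈ q.support, i < M) :
    ∃ p : Fin M →₀ A, ι A M p = q := by
  have : q ∈ LinearMap.range (ι A M) := by
    rw [← Finsupp.sum_single q, Finsupp.sum]
    apply Submodule.sum_mem
    intro i hi
    exact ⟨Finsupp.single ⟨i, h i hi⟩ (q i), by simp [ι, Finsupp.mapDomain_single]⟩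
  exact this

variable (B : Type) [AddCommGroup B] [Module A B]

/-- One stage of the chain. -/
structure SD where
  m : ℕ
  r : ℕ
  y : (Fin r →₀ A) →ₗ[A] B
  c : (Fin m →₀ A) →ₗ[A] (Fin r →₀ A)

variable {A B}
variable (π : (ℕ →₀ A) →ₗ[A] B) (k : ℕ → (ℕ →₀ A))

def Inv (n : ℕ) (s : SD A B) : Prop :=
  n ≤ s.m ∧ s.y ∘ₗ s.c = π ∘ₗ ι A s.m ∧
    ∀ i < n, ∃ p : Fin s.m →₀ A, ι A s.m p = k i ∧ s.c p = 0

def LinkP (s s' : SD A B) : Prop :=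
  ∃ (hm : s.m ≤ s'.m) (t : (Fin s.r →₀ A) →ₗ[A] (Fin s'.r →₀ A)),
    s'.y ∘ₗ t = s.y ∧ t ∘ₗ s.c = s'.c ∘ₗ castm A hm ∧
      LinearMap.range t ≤ LinearMap.range s'.c

theorem step [Module.Flat A B] (hπ : Surjective π) (hkker : ∀ i, π (k i) = 0)
    (n : ℕ) (s : SD A B) (hs : Inv π k n s) :
    ∃ s' : SD A B, Inv π k (n + 1) s' ∧ LinkP s s' := by
  obtain ⟨m, r, y, c⟩ := s
  obtain ⟨h1, h2, h3⟩ := hs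
  simp only at h1 h2 h3
  -- lifts of the images of the basis vectors of the current stage
  choose q hq using fun j : Fin r => hπ (y (Finsupp.single j 1))
  -- the new window size
  set m' : ℕ := max (max m (n + 1))
      (max ((k n).support.sup id + 1)
        ((Finset.univ.sup fun j : Fin r => (q j).support.sup id) + 1)) with hm'def
  have hmm' : m ≤ m' := le_trans (le_max_left _ _) (le_max_left _ _)
  have hnm' : n + 1 ≤ m' := le_trans (le_max_right _ _) (le_max_left _ _)
  -- k n fits in the window
  obtain ⟨ktil, hktil⟩ : ∃ p : Fin m' →₀ A, ι A m' p = k n := by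
    apply mem_range_ι
    intro i hi
    calc i ≤ (k n).support.sup id := Finset.le_sup (f := id) hi
    _ < (k n).support.sup id + 1 := Nat.lt_succ_self _
    _ ≤ m' := le_trans (le_max_left _ _) (le_max_right _ _)
  -- the lifts fit in the window
  have hqtil : ∀ j : Fin r, ∃ p : Fin m' →₀ A, ι A m' p = q j := by
    intro j
    apply mem_range_ι
    intro i hi
    calc i ≤ (q j).support.sup id := Finset.le_sup (f := id) hi
    _ ≤ Finset.univ.sup fun j : Fin r => (q j).support.sup id :=
        Finset.le_sup (f := fun j : Fin r => (q j).support.sup id) (Finset.mem_univ j)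
    _ < _ + 1 := Nat.lt_succ_self _
    _ ≤ m' := le_trans (le_max_right _ _) (le_max_right _ _)
  choose qtil hqtil using hqtil
  set qmap : (Fin r →₀ A) →ₗ[A] (Fin m' →₀ A) := Finsupp.linearCombination A qtil with hqmapdef
  have hqmap : ∀ v : Fin r →₀ A, π (ι A m' (qmap v)) = y v := by
    intro v
    have : (π ∘ₗ ι A m' ∘ₗ qmap) = y := by
      apply Finsupp.lhom_ext
      intro j b
      simp only [LinearMap.comp_apply, hqmapdef, Finsupp.linearCombination_single,
        map_smul, hqtil, hq]
      rw [← map_smul, Finsupp.smul_single, smul_eq_mul, mul_one]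
    exact LinearMap.congr_fun this v
  -- the big free module and the map to B
  set x : ((Fin m' →₀ A) × (Fin r →₀ A)) →ₗ[A] B :=
    LinearMap.coprod (π ∘ₗ ι A m') y with hxdef
  -- the relations map
  set pk : (((Fin m →₀ A) × (Fin r →₀ A)) × A) →ₗ[A] (Fin m →₀ A) :=
    (LinearMap.fst A _ _) ∘ₗ (LinearMap.fst A _ _) with hpkdef
  set vk : (((Fin m →₀ A) × (Fin r →₀ A)) × A) →ₗ[A] (Fin r →₀ A) :=
    (LinearMap.snd A _ _) ∘ₗ (LinearMap.fst A _ _) with hvkdef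
  set ak : (((Fin m →₀ A) × (Fin r →₀ A)) × A) →ₗ[A] A :=
    (LinearMap.snd A _ _) with hakdef
  set f : (((Fin m →₀ A) × (Fin r →₀ A)) × A) →ₗ[A] ((Fin m' →₀ A) × (Fin r →₀ A)) :=
    LinearMap.prod
      ((castm A hmm') ∘ₗ pk + qmap ∘ₗ vk + (LinearMap.toSpanSingleton A _ ktil) ∘ₗ ak)
      (-(c ∘ₗ pk) - vk) with hfdef
  have hf_apply : ∀ (p : Fin m →₀ A) (v : Fin r →₀ A) (a : A),
      f ((p, v), a) = (castm A hmm' p + qmap v + a • ktil, -(c p) - v) := by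
    intro p v a
    simp [hfdef, hpkdef, hvkdef, hakdef, LinearMap.prod_apply, LinearMap.toSpanSingleton_apply]
  have hxf : x ∘ₗ f = 0 := by
    apply LinearMap.ext
    rintro ⟨⟨p, v⟩, a⟩
    simp only [LinearMap.comp_apply, hf_apply, hxdef, LinearMap.coprod_apply,
      LinearMap.zero_apply]
    have hc : y (c p) = π (ι A m p) := LinearMap.congr_fun h2 p
    simp only [map_add, map_smul, map_sub, map_neg, ι_castm, hktil, hqmap, hc, hkker,
      smul_zero]
    abel
  obtain ⟨κ, hκ, a, y', hya, haf⟩ : ∃ (κ : Type) (_ : Fintype κ)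
      (a : ((Fin m' →₀ A) × (Fin r →₀ A)) →ₗ[A] (κ →₀ A)) (y' : (κ →₀ A) →ₗ[A] B),
      x = y' ∘ₗ a ∧ a ∘ₗ f = 0 := by
    obtain ⟨kk, a, y', h1, h2⟩ :=
      Module.Flat.exists_factorization_of_comp_eq_zero_of_free (R := A) (M := B) hxf
    exact ⟨Fin kk, inferInstance, a, y', h1, h2⟩
  -- reindex κ by Fin
  set e : κ ≃ Fin (Fintype.card κ) := Fintype.equivFin κ with hedef
  set E : (κ →₀ A) ≃ₗ[A] (Fin (Fintype.card κ) →₀ A) := Finsupp.domLCongr e with hEdef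
  set a' : ((Fin m' →₀ A) × (Fin r →₀ A)) →ₗ[A] (Fin (Fintype.card κ) →₀ A) :=
    (E : (κ →₀ A) →ₗ[A] _) ∘ₗ a with ha'def
  set y'' : (Fin (Fintype.card κ) →₀ A) →ₗ[A] B := y' ∘ₗ (E.symm : _ →ₗ[A] (κ →₀ A))
    with hy''def
  have hya' : ∀ u, y'' (a' u) = x u := by
    intro u
    simp only [hy''def, ha'def, LinearMap.comp_apply, LinearEquiv.coe_coe,
      LinearEquiv.symm_apply_apply]
    exact (LinearMap.congr_fun hya u).symm
  have haf' : ∀ w, a' (f w) = 0 := by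
    intro w
    have : a (f w) = 0 := LinearMap.congr_fun haf w
    simp only [ha'def, LinearMap.comp_apply, this, map_zero]
  refine ⟨⟨m', Fintype.card κ, y'', a' ∘ₗ LinearMap.inl A _ _⟩, ⟨hnm', ?_, ?_⟩,
    hmm', a' ∘ₗ LinearMap.inr A _ _, ?_, ?_, ?_⟩
  · -- y'' ∘ c' = π ∘ ι
    apply LinearMap.ext
    intro p
    simp only [LinearMap.comp_apply, LinearMap.inl_apply, hya']
    simp [hxdef]
  · -- relations killed
    intro i hi
    rcases Nat.lt_succ_iff_lt_or_eq.mp hi with hi | hi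
    · obtain ⟨p, hp1, hp2⟩ := h3 i hi
      refine ⟨castm A hmm' p, by rw [ι_castm, hp1], ?_⟩
      have := haf' ((p, 0), 0)
      rw [hf_apply] at this
      simpa [hp2] using this
    · subst hi
      refine ⟨ktil, hktil, ?_⟩
      have := haf' ((0, 0), 1)
      rw [hf_apply] at this
      simpa using this
  · -- y'' ∘ t = y
    apply LinearMap.ext
    intro v
    simp only [LinearMap.comp_apply, LinearMap.inr_apply, hya']
    simp [hxdef]
  · -- t ∘ c = c' ∘ cast
    apply LinearMap.ext
    intro p
    have := haf' ((p, 0), 0)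
    rw [hf_apply] at this
    simp only [map_zero, add_zero, smul_zero, zero_smul, neg_zero, sub_zero] at this
    have h0 : a' (castm A hmm' p, -(c p)) = 0 := this
    have heq : a' (castm A hmm' p, 0) = a' (0, c p) := by
      rw [← sub_eq_zero, ← map_sub]
      convert h0 using 2
      simp [Prod.ext_iff]
    simp only [LinearMap.comp_apply, LinearMap.inr_apply, LinearMap.inl_apply]
    exact heq.symm
  · -- range t ≤ range c'
    rintro w ⟨v, rfl⟩
    refine ⟨qmap v, ?_⟩
    have := haf' ((0, v), 0)
    rw [hf_apply] at this
    simp only [map_zero, zero_add, zero_smul, add_zero, neg_zero, zero_sub] at this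
    have h0 : a' (qmap v, -v) = 0 := this
    have heq : a' (qmap v, 0) = a' (0, v) := by
      rw [← sub_eq_zero, ← map_sub]
      convert h0 using 2
      simp [Prod.ext_iff]
    simp only [LinearMap.comp_apply, LinearMap.inl_apply, LinearMap.inr_apply, heq]

section Chain

variable [Module.Flat A B] (hπ : Surjective π) (hkker : ∀ i, π (k i) = 0)

/-- The chain of stages. -/
def chain (n : ℕ) : {s : SD A B // Inv π k n s} :=
  Nat.rec
    ⟨⟨0, 0, 0, 0⟩, by
      refine ⟨le_refl 0, ?_, fun i hi => absurd hi (Nat.not_lt_zero i)⟩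
      apply Finsupp.lhom_ext
      intro i b
      exact i.elim0⟩
    (fun n ih => ⟨(step π k hπ hkker n ih.1 ih.2).choose,
      (step π k hπ hkker n ih.1 ih.2).choose_spec.1⟩) n

theorem chain_link (n : ℕ) :
    LinkP (chain π k hπ hkker n).1 (chain π k hπ hkker (n + 1)).1 :=
  (step π k hπ hkker n (chain π k hπ hkker n).1 (chain π k hπ hkker n).2).choose_spec.2

def Mm (n : ℕ) : ℕ := (chain π k hπ hkker n).1.m
def Rr (n : ℕ) : ℕ := (chain π k hπ hkker n).1.r

def yy (n : ℕ) : (Fin (Rr π k hπ hkker n) →₀ A) →ₗ[A] B := (chain π k hπ hkker n).1.y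
def cc (n : ℕ) : (Fin (Mm π k hπ hkker n) →₀ A) →ₗ[A] (Fin (Rr π k hπ hkker n) →₀ A) :=
  (chain π k hπ hkker n).1.c

theorem hmlt (n : ℕ) : Mm π k hπ hkker n ≤ Mm π k hπ hkker (n + 1) :=
  (chain_link π k hπ hkker n).choose

/-- connecting maps -/
def tt (n : ℕ) : (Fin (Rr π k hπ hkker n) →₀ A) →ₗ[A] (Fin (Rr π k hπ hkker (n + 1)) →₀ A) :=
  (chain_link π k hπ hkker n).choose_spec.choose

theorem ht1 (n : ℕ) : (yy π k hπ hkker (n + 1)) ∘ₗ (tt π k hπ hkker n) = yy π k hπ hkker n :=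
  (chain_link π k hπ hkker n).choose_spec.choose_spec.1

theorem ht2 (n : ℕ) : (tt π k hπ hkker n) ∘ₗ (cc π k hπ hkker n)
    = (cc π k hπ hkker (n + 1)) ∘ₗ castm A (hmlt π k hπ hkker n) :=
  (chain_link π k hπ hkker n).choose_spec.choose_spec.2.1

theorem ht3 (n : ℕ) : LinearMap.range (tt π k hπ hkker n)
    ≤ LinearMap.range (cc π k hπ hkker (n + 1)) :=
  (chain_link π k hπ hkker n).choose_spec.choose_spec.2.2

theorem m_mono : ∀ {n M : ℕ}, n ≤ M → Mm π k hπ hkker n ≤ Mm π k hπ hkker M := by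
  intro n M h
  induction M, h using Nat.le_induction with
  | base => exact le_refl _
  | succ M hM ih => exact le_trans ih (hmlt π k hπ hkker M)

theorem n_le_m (n : ℕ) : n ≤ Mm π k hπ hkker n := (chain π k hπ hkker n).2.1

theorem h2' (n : ℕ) (p) : (yy π k hπ hkker n) ((cc π k hπ hkker n) p)
    = π (ι A (Mm π k hπ hkker n) p) := LinearMap.congr_fun (chain π k hπ hkker n).2.2.1 p

theorem h3' (n : ℕ) : ∀ i < n, ∃ p : Fin (Mm π k hπ hkker n) →₀ A,
    ι A (Mm π k hπ hkker n) p = k i ∧ (cc π k hπ hkker n) p = 0 :=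
  (chain π k hπ hkker n).2.2.2

attribute [irreducible] Mm Rr yy cc tt

end Chain

section Telescope

variable [Module.Flat A B] (hπ : Surjective π) (hkker : ∀ i, π (k i) = 0)

abbrev FF (n : ℕ) : Type := Fin (Rr π k hπ hkker n) →₀ A

abbrev GG := Π₀ n : ℕ, FF π k hπ hkker n

def sing (n : ℕ) : FF π k hπ hkker n →ₗ[A] GG π k hπ hkker :=
  DFinsupp.lsingle (R := A) (M := FF π k hπ hkker) n

theorem sing_apply (n : ℕ) (z : FF π k hπ hkker n) :
    sing π k hπ hkker n z = DFinsupp.single n z := rfl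

def dmap (n : ℕ) : FF π k hπ hkker n →ₗ[A] GG π k hπ hkker :=
  sing π k hπ hkker n -
    ((sing π k hπ hkker (n + 1)).comp (tt π k hπ hkker n) :
      FF π k hπ hkker n →ₗ[A] GG π k hπ hkker)

def dd : GG π k hπ hkker →ₗ[A] GG π k hπ hkker :=
  DFinsupp.lsum ℕ (dmap π k hπ hkker)

def gg : GG π k hπ hkker →ₗ[A] B := DFinsupp.lsum ℕ (yy π k hπ hkker)

theorem d_single (n : ℕ) (z : FF π k hπ hkker n) :
    dd π k hπ hkker (DFinsupp.single n z)
      = DFinsupp.single n z - DFinsupp.single (n + 1) (tt π k hπ hkker n z) := by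
  unfold dd
  rw [DFinsupp.lsum_single]
  rw [dmap, LinearMap.sub_apply, LinearMap.comp_apply, sing_apply, sing_apply]

theorem g_single (n : ℕ) (z : FF π k hπ hkker n) :
    gg π k hπ hkker (DFinsupp.single n z) = yy π k hπ hkker n z := by
  unfold gg
  rw [DFinsupp.lsum_single]

def prev (w : GG π k hπ hkker) : (n : ℕ) → FF π k hπ hkker n := fun n =>
  match n with
  | 0 => 0
  | (j + 1) => tt π k hπ hkker j (w j)

theorem d_apply (w : GG π k hπ hkker) (n : ℕ) :
    dd π k hπ hkker w n = w n - prev π k hπ hkker w n := by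
  induction w using DFinsupp.induction with
  | h0 =>
    rw [map_zero]
    cases n <;> simp [prev]
  | ha i b w' hw' hb ih =>
    rw [map_add, DFinsupp.add_apply, DFinsupp.add_apply, d_single, ih]
    have hprev : prev π k hπ hkker (DFinsupp.single i b + w') n
        - prev π k hπ hkker w' n
        = (DFinsupp.single (i + 1) (tt π k hπ hkker i b) : GG π k hπ hkker) n := by
      cases n with
      | zero =>
        show (0 : FF π k hπ hkker 0) - 0 = _
        rw [DFinsupp.single_eq_of_ne (Nat.succ_ne_zero i).symm]
        simp
      | succ j =>
        show tt π k hπ hkker j ((DFinsupp.single i b + w') j) - tt π k hπ hkker j (w' j) = _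
        rw [DFinsupp.add_apply, map_add]
        rcases eq_or_ne i j with rfl | hij
        · rw [DFinsupp.single_eq_same, DFinsupp.single_eq_same]
          abel
        · rw [DFinsupp.single_eq_of_ne hij.symm,
            DFinsupp.single_eq_of_ne (fun h => hij (Nat.succ_injective h).symm)]
          simp
    rw [DFinsupp.sub_apply, ← hprev]
    abel

theorem d_inj : Injective (dd π k hπ hkker) := by
  apply LinearMap.ker_eq_bot.mp
  rw [eq_bot_iff]
  intro w hw
  rw [LinearMap.mem_ker] at hw
  have hcomp : ∀ n, w n = 0 := by
    intro n
    induction n with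
    | zero =>
      have h0 := d_apply π k hπ hkker w 0
      rw [hw] at h0
      simpa [prev] using h0.symm
    | succ j ih =>
      have h0 := d_apply π k hπ hkker w (j + 1)
      rw [hw] at h0
      have h1 : (0 : FF π k hπ hkker (j + 1))
          = w (j + 1) - tt π k hπ hkker j (w j) := h0
      rw [ih, map_zero, sub_zero] at h1
      exact h1.symm
  exact DFinsupp.ext fun n => by rw [hcomp n]; rfl

theorem range_d_le_ker_g :
    LinearMap.range (dd π k hπ hkker) ≤ LinearMap.ker (gg π k hπ hkker) := by
  rw [LinearMap.range_le_ker_iff]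
  apply DFinsupp.lhom_ext
  intro n x
  rw [LinearMap.comp_apply, d_single, map_sub, g_single, g_single]
  have h1 := LinearMap.congr_fun (ht1 π k hπ hkker n) x
  simp only [LinearMap.comp_apply] at h1
  rw [h1, LinearMap.zero_apply, sub_self]

end Telescope

section Exactness

variable [Module.Flat A B] (hπ : Surjective π) (hkker : ∀ i, π (k i) = 0)

/-- Pushing a single generator up the chain, staying in the range of `d`. -/
theorem up (n : ℕ) (z : FF π k hπ hkker n) :
    ∀ M, ∀ _ : n ≤ M, ∃ w : FF π k hπ hkker M,
      (DFinsupp.single n z - DFinsupp.single M w : GG π k hπ hkker)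
        ∈ LinearMap.range (dd π k hπ hkker)
      ∧ yy π k hπ hkker M w = yy π k hπ hkker n z := by
  intro M hM
  induction M, hM using Nat.le_induction with
  | base => exact ⟨z, by simp, rfl⟩
  | succ M hM ih =>
    obtain ⟨w, hw1, hw2⟩ := ih
    refine ⟨tt π k hπ hkker M w, ?_, ?_⟩
    · have h2 : (DFinsupp.single M w
          - DFinsupp.single (M + 1) (tt π k hπ hkker M w) : GG π k hπ hkker)
          ∈ LinearMap.range (dd π k hπ hkker) :=
        ⟨DFinsupp.single M w, d_single π k hπ hkker M w⟩
      have := Submodule.add_mem _ hw1 h2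
      simpa using this
    · have h1 := LinearMap.congr_fun (ht1 π k hπ hkker M) w
      simp only [LinearMap.comp_apply] at h1
      rw [h1, hw2]

/-- Pushing an element in the range of `c` up the chain:
it stays in the compatible ranges. -/
theorem upc (n : ℕ) (p : Fin (Mm π k hπ hkker n) →₀ A) :
    ∀ M, ∀ hM : n ≤ M,
      (DFinsupp.single n (cc π k hπ hkker n p)
        - DFinsupp.single M (cc π k hπ hkker M
            (castm A (m_mono π k hπ hkker hM) p)) : GG π k hπ hkker)
        ∈ LinearMap.range (dd π k hπ hkker) := by
  intro M hM
  induction M, hM using Nat.le_induction with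
  | base =>
    rw [castm_rfl]
    simp
  | succ M hM ih =>
    have h2 : (DFinsupp.single M (cc π k hπ hkker M (castm A (m_mono π k hπ hkker hM) p))
        - DFinsupp.single (M + 1)
            (tt π k hπ hkker M (cc π k hπ hkker M (castm A (m_mono π k hπ hkker hM) p)))
        : GG π k hπ hkker) ∈ LinearMap.range (dd π k hπ hkker) :=
      ⟨_, d_single π k hπ hkker M _⟩
    have h3 := LinearMap.congr_fun (ht2 π k hπ hkker M)
      (castm A (m_mono π k hπ hkker hM) p)
    simp only [LinearMap.comp_apply] at h3
    rw [h3, castm_castm] at h2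
    have := Submodule.add_mem _ ih h2
    simpa using this

/-- Collapse: every element of `G` is, modulo the range of `d`,
a single generator whose image matches. -/
theorem collapse (w : GG π k hπ hkker) :
    ∃ (N : ℕ) (z : FF π k hπ hkker N),
      (w - DFinsupp.single N z) ∈ LinearMap.range (dd π k hπ hkker)
      ∧ yy π k hπ hkker N z = gg π k hπ hkker w := by
  induction w using DFinsupp.induction with
  | h0 => exact ⟨0, 0, by simp, by simp⟩
  | ha i b w' hw' hb ih =>
    obtain ⟨N', z', hz1, hz2⟩ := ih
    obtain ⟨x₁, hx1, hx2⟩ := up π k hπ hkker i b (max i N') (le_max_left _ _)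
    obtain ⟨z₂, hz21, hz22⟩ := up π k hπ hkker N' z' (max i N') (le_max_right _ _)
    refine ⟨max i N', x₁ + z₂, ?_, ?_⟩
    · have : (DFinsupp.single i b + w' - DFinsupp.single (max i N') (x₁ + z₂)
          : GG π k hπ hkker)
          = (DFinsupp.single i b - DFinsupp.single (max i N') x₁)
            + (w' - DFinsupp.single N' z')
            + (DFinsupp.single N' z' - DFinsupp.single (max i N') z₂) := by
        rw [DFinsupp.single_add]
        abel
      rw [this]
      exact Submodule.add_mem _ (Submodule.add_mem _ hx1 hz1) hz21
    · rw [map_add, hx2, hz22, hz2, map_add, g_single]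

/-- Kernel elements die further up the chain. -/
theorem kill (hk : Submodule.span A (Set.range k) = LinearMap.ker π)
    (N : ℕ) (z : FF π k hπ hkker N) (hz : yy π k hπ hkker N z = 0) :
    (DFinsupp.single N z : GG π k hπ hkker) ∈ LinearMap.range (dd π k hπ hkker) := by
  -- t N z is in the range of c (N+1)
  obtain ⟨p, hp⟩ := ht3 π k hπ hkker N ⟨z, rfl⟩
  -- π of the corresponding element of P vanishes
  have hπp : π (ι A (Mm π k hπ hkker (N + 1)) p) = 0 := by
    rw [← h2' π k hπ hkker (N + 1) p, hp]
    have h1 := LinearMap.congr_fun (ht1 π k hπ hkker N) z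
    simp only [LinearMap.comp_apply] at h1
    rw [h1, hz]
  -- hence it is a finite combination of the k i
  have hmem : ι A (Mm π k hπ hkker (N + 1)) p ∈ Submodule.span A (Set.range k) := by
    rw [hk]; exact hπp
  rw [Finsupp.mem_span_range_iff_exists_finsupp] at hmem
  obtain ⟨μ, hμ⟩ := hmem
  set L : ℕ := max (N + 1) (μ.support.sup id + 1) with hLdef
  have hNL : N + 1 ≤ L := le_max_left _ _
  -- the element is in the span of the k i for i < L
  have hspan : ι A (Mm π k hπ hkker (N + 1)) p
      ∈ Submodule.span A (k '' Set.Iio L) := by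
    rw [← hμ, Finsupp.sum]
    apply Submodule.sum_mem
    intro i hi
    apply Submodule.smul_mem
    apply Submodule.subset_span
    refine ⟨i, ?_, rfl⟩
    have : i ≤ μ.support.sup id := Finset.le_sup (f := id) hi
    simp only [Set.mem_Iio]
    omega
  -- elements of that span are killed by c L
  have hkill : ∀ x ∈ Submodule.span A (k '' Set.Iio L),
      ∃ q : Fin (Mm π k hπ hkker L) →₀ A,
        ι A (Mm π k hπ hkker L) q = x ∧ cc π k hπ hkker L q = 0 := by
    intro x hx
    induction hx using Submodule.span_induction with
    | mem x hxmem =>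
      obtain ⟨i, hiL, rfl⟩ := hxmem
      exact h3' π k hπ hkker L i hiL
    | zero => exact ⟨0, by simp, by simp⟩
    | add x y hx hy ihx ihy =>
      obtain ⟨q1, hq1, hq1'⟩ := ihx
      obtain ⟨q2, hq2, hq2'⟩ := ihy
      exact ⟨q1 + q2, by rw [map_add, hq1, hq2], by rw [map_add, hq1', hq2', add_zero]⟩
    | smul a x hx ihx =>
      obtain ⟨q, hq, hq'⟩ := ihx
      exact ⟨a • q, by rw [map_smul, hq], by rw [map_smul, hq', smul_zero]⟩
  obtain ⟨q, hq, hq'⟩ := hkill _ hspan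
  -- hence c L (cast p) = 0
  have hcast : castm A (m_mono π k hπ hkker hNL) p = q := by
    apply ι_inj A (Mm π k hπ hkker L)
    rw [hq, ι_castm]
  have hcL : cc π k hπ hkker L (castm A (m_mono π k hπ hkker hNL) p) = 0 := by
    rw [hcast, hq']
  -- now conclude
  have h1 : (DFinsupp.single N z
      - DFinsupp.single (N + 1) (tt π k hπ hkker N z) : GG π k hπ hkker)
      ∈ LinearMap.range (dd π k hπ hkker) := ⟨_, d_single π k hπ hkker N z⟩
  have h2 : (DFinsupp.single (N + 1) (cc π k hπ hkker (N + 1) p)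
      - DFinsupp.single L (cc π k hπ hkker L (castm A (m_mono π k hπ hkker hNL) p))
      : GG π k hπ hkker) ∈ LinearMap.range (dd π k hπ hkker) :=
    upc π k hπ hkker (N + 1) p L hNL
  rw [hcL, hp] at h2
  simp only [DFinsupp.single_zero, sub_zero] at h2
  have := Submodule.add_mem _ h1 h2
  simpa using this

theorem g_surj : Surjective (gg π k hπ hkker) := by
  intro b
  obtain ⟨u, hu⟩ := hπ b
  set n₀ : ℕ := u.support.sup id + 1 with hn₀
  have hsupp : ∀ i ∈ u.support, i < Mm π k hπ hkker n₀ := by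
    intro i hi
    have h1 : i ≤ u.support.sup id := Finset.le_sup (f := id) hi
    have h2 := n_le_m π k hπ hkker n₀
    omega
  obtain ⟨p, hpu⟩ := mem_range_ι A hsupp
  refine ⟨DFinsupp.single n₀ (cc π k hπ hkker n₀ p), ?_⟩
  rw [g_single, h2' π k hπ hkker n₀ p, hpu, hu]

theorem ker_g_eq_range_d (hk : Submodule.span A (Set.range k) = LinearMap.ker π) :
    LinearMap.ker (gg π k hπ hkker) = LinearMap.range (dd π k hπ hkker) := by
  apply le_antisymm
  · intro w hw
    rw [LinearMap.mem_ker] at hw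
    obtain ⟨N, z, hz1, hz2⟩ := collapse π k hπ hkker w
    rw [hw] at hz2
    have hkill := kill π k hπ hkker hk N z hz2
    have := Submodule.add_mem _ hz1 hkill
    simpa using this
  · exact range_d_le_ker_g π k hπ hkker

end Exactness

/-- Main module-level theorem: given a countable presentation of a flat module,
there is a length-1 free resolution. -/
theorem main_module (A B : Type) [CommRing A] [AddCommGroup B] [Module A B]
    [Module.Flat A B] (π : (ℕ →₀ A) →ₗ[A] B) (k : ℕ → (ℕ →₀ A))
    (hπ : Surjective π) (hk : Submodule.span A (Set.range k) = LinearMap.ker π) :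
    ∃ (I J : Type) (f : (I →₀ A) →ₗ[A] (J →₀ A)) (g : (J →₀ A) →ₗ[A] B),
      Injective f ∧ Surjective g ∧ LinearMap.ker g = LinearMap.range f := by
  have hkker : ∀ i, π (k i) = 0 := by
    intro i
    have : k i ∈ LinearMap.ker π := by
      rw [← hk]
      exact Submodule.subset_span ⟨i, rfl⟩
    exact this
  set E : ((Σ n : ℕ, Fin (Rr π k hπ hkker n)) →₀ A) ≃ₗ[A] GG π k hπ hkker :=
    sigmaFinsuppLequivDFinsupp A with hEdef
  refine ⟨(Σ n : ℕ, Fin (Rr π k hπ hkker n)), (Σ n : ℕ, Fin (Rr π k hπ hkker n)),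
    (E.symm : GG π k hπ hkker →ₗ[A] _) ∘ₗ dd π k hπ hkker ∘ₗ (E : _ →ₗ[A] GG π k hπ hkker),
    gg π k hπ hkker ∘ₗ (E : _ →ₗ[A] GG π k hπ hkker), ?_, ?_, ?_⟩
  · exact E.symm.injective.comp ((d_inj π k hπ hkker).comp E.injective)
  · exact (g_surj π k hπ hkker).comp E.surjective
  · rw [LinearMap.ker_comp, ker_g_eq_range_d π k hπ hkker hk, LinearMap.range_comp,
      LinearMap.range_comp, LinearEquiv.range, Submodule.map_top,
      Submodule.map_equiv_eq_comap_symm, LinearEquiv.symm_symm]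

/-- A finitely presented algebra has a countable module presentation. -/
theorem exists_presentation (A B : Type) [CommRing A] [CommRing B] [Algebra A B]
    (hB : Algebra.FinitePresentation A B) :
    ∃ (π : (ℕ →₀ A) →ₗ[A] B) (k : ℕ → (ℕ →₀ A)),
      Surjective π ∧ Submodule.span A (Set.range k) = LinearMap.ker π := by
  obtain ⟨nv, fa, hfs, hfk⟩ := hB.out
  obtain ⟨G, hGker⟩ := hfk
  let b : Module.Basis (Fin nv →₀ ℕ) A (MvPolynomial (Fin nv) A) :=
    MvPolynomial.basisMonomials (Fin nv) A
  let fL : MvPolynomial (Fin nv) A →ₗ[A] B := fa.toLinearMap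
  have hfLapp : ∀ w, fL w = fa w := fun w => rfl
  -- the projection; kills the extra ℕ-indexed basis vectors
  let χ : (((Fin nv →₀ ℕ) ⊕ ℕ) →₀ A) →ₗ[A] ((Fin nv →₀ ℕ) →₀ A) :=
    Finsupp.lsum A (Sum.elim (fun s => Finsupp.lsingle s) (fun _ => 0))
  have χ_single_inl : ∀ (s : Fin nv →₀ ℕ) (a : A),
      χ (Finsupp.single (Sum.inl s) a) = Finsupp.single s a := by
    intro s a
    rw [show χ = Finsupp.lsum A (Sum.elim (fun s => Finsupp.lsingle s) (fun _ => 0)) from rfl,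
      Finsupp.lsum_single]
    rfl
  have χ_single_inr : ∀ (j : ℕ) (a : A), χ (Finsupp.single (Sum.inr j) a) = 0 := by
    intro j a
    rw [show χ = Finsupp.lsum A (Sum.elim (fun s => Finsupp.lsingle s) (fun _ => 0)) from rfl,
      Finsupp.lsum_single]
    rfl
  have χ_apply : ∀ (w : ((Fin nv →₀ ℕ) ⊕ ℕ) →₀ A) (s : Fin nv →₀ ℕ),
      χ w s = w (Sum.inl s) := by
    intro w s
    induction w using Finsupp.induction with
    | zero => simp
    | single_add t a w hw hai ih =>
      rw [map_add, Finsupp.add_apply, Finsupp.add_apply, ih]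
      rcases t with s' | j
      · rw [χ_single_inl]
        rcases eq_or_ne s' s with rfl | hne
        · rw [Finsupp.single_eq_same, Finsupp.single_eq_same]
        · rw [Finsupp.single_eq_of_ne' hne,
            Finsupp.single_eq_of_ne' (fun h => hne (Sum.inl_injective h))]
      · rw [χ_single_inr]
        rw [Finsupp.single_eq_of_ne' (by simp)]
        simp
  let ψ : (((Fin nv →₀ ℕ) ⊕ ℕ) →₀ A) →ₗ[A] MvPolynomial (Fin nv) A :=
    (b.repr.symm : ((Fin nv →₀ ℕ) →₀ A) →ₗ[A] MvPolynomial (Fin nv) A) ∘ₗ χ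
  have hψapp : ∀ w, ψ w = b.repr.symm (χ w) := fun w => rfl
  let ρ : MvPolynomial (Fin nv) A →ₗ[A] (((Fin nv →₀ ℕ) ⊕ ℕ) →₀ A) :=
    (Finsupp.lmapDomain A A Sum.inl) ∘ₗ
      (b.repr : MvPolynomial (Fin nv) A →ₗ[A] ((Fin nv →₀ ℕ) →₀ A))
  have hρapp : ∀ x, ρ x = Finsupp.mapDomain Sum.inl (b.repr x) := fun x => rfl
  have ψρ : ∀ x : MvPolynomial (Fin nv) A, ψ (ρ x) = x := by
    intro x
    have hχmap : χ (Finsupp.mapDomain Sum.inl (b.repr x)) = b.repr x := by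
      apply Finsupp.ext
      intro s
      rw [χ_apply, Finsupp.mapDomain_apply Sum.inl_injective]
    rw [hρapp, hψapp, hχmap, LinearEquiv.symm_apply_apply]
  have ψ_ker : ∀ w, ψ w = 0 → χ w = 0 := by
    intro w hw
    rw [hψapp] at hw
    have : b.repr (b.repr.symm (χ w)) = b.repr 0 := by rw [hw]
    simpa using this
  let φ : (((Fin nv →₀ ℕ) ⊕ ℕ) →₀ A) →ₗ[A] B := fL ∘ₗ ψ
  have hφapp : ∀ w, φ w = fa (ψ w) := fun w => rfl
  -- the monomial-times-generator elements
  let gens : ((Fin nv →₀ ℕ) × {x // x ∈ G}) → MvPolynomial (Fin nv) A :=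
    fun pg => (MvPolynomial.monomial pg.1 (1 : A)) * pg.2.1
  have hgensapp : ∀ pg, gens pg = (MvPolynomial.monomial pg.1 (1 : A)) * pg.2.1 :=
    fun pg => rfl
  -- the ideal as an A-span
  have M1 : ∀ x ∈ RingHom.ker fa.toRingHom, x ∈ Submodule.span A (Set.range gens) := by
    intro x hx
    rw [← hGker] at hx
    induction hx using Submodule.span_induction with
    | mem g hg =>
      apply Submodule.subset_span
      refine ⟨(0, ⟨g, hg⟩), ?_⟩
      rw [hgensapp]
      simp [MvPolynomial.monomial_zero', one_mul]
    | zero => exact Submodule.zero_mem _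
    | add x y _ _ ihx ihy => exact Submodule.add_mem _ ihx ihy
    | smul r x hxmem ihx =>
      rw [smul_eq_mul]
      clear hxmem
      -- show multiplication preserves the A-span
      have hr : r ∈ Submodule.span A (Set.range fun m : Fin nv →₀ ℕ =>
          (MvPolynomial.monomial m (1 : A) : MvPolynomial (Fin nv) A)) := by
        have := Module.Basis.mem_span b r
        rwa [show b = MvPolynomial.basisMonomials (Fin nv) A from rfl,
          MvPolynomial.coe_basisMonomials] at this
      induction hr using Submodule.span_induction with
      | mem r' hr' =>
        obtain ⟨m, rfl⟩ := hr'
        -- multiply a monomial into the span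
        induction ihx using Submodule.span_induction with
        | mem x' hx' =>
          obtain ⟨⟨m₂, g⟩, rfl⟩ := hx'
          apply Submodule.subset_span
          refine ⟨(m + m₂, g), ?_⟩
          rw [hgensapp, hgensapp]
          rw [← mul_assoc, MvPolynomial.monomial_mul, mul_one]
        | zero => rw [mul_zero]; exact Submodule.zero_mem _
        | add x y _ _ ihx1 ihx2 => rw [mul_add]; exact Submodule.add_mem _ ihx1 ihx2
        | smul a x _ ihx1 =>
          rw [mul_smul_comm]
          exact Submodule.smul_mem _ a ihx1
      | zero => rw [zero_mul]; exact Submodule.zero_mem _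
      | add r1 r2 _ _ ih1 ih2 => rw [add_mul]; exact Submodule.add_mem _ ih1 ih2
      | smul a r' _ ih1 =>
        rw [smul_mul_assoc]
        exact Submodule.smul_mem _ a ih1
  have M1' : ∀ pg : (Fin nv →₀ ℕ) × {x // x ∈ G}, fa (gens pg) = 0 := by
    intro pg
    have hmem : gens pg ∈ RingHom.ker fa.toRingHom := by
      rw [← hGker]
      exact Ideal.mul_mem_left _ _ (Ideal.subset_span pg.2.2)
    exact hmem
  -- the generators of the kernel of φ
  let genτ : (ℕ ⊕ ((Fin nv →₀ ℕ) × {x // x ∈ G})) → (((Fin nv →₀ ℕ) ⊕ ℕ) →₀ A) :=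
    Sum.elim (fun j => Finsupp.single (Sum.inr j) (1 : A)) (fun pg => ρ (gens pg))
  have ker_phi : LinearMap.ker φ = Submodule.span A (Set.range genτ) := by
    apply le_antisymm
    · intro u hu
      rw [LinearMap.mem_ker, hφapp] at hu
      have hψu' : ψ u ∈ Submodule.span A (Set.range gens) := M1 _ hu
      have hρψu : ρ (ψ u) ∈ Submodule.span A (Set.range genτ) := by
        have h1 : ρ (ψ u) ∈ Submodule.map ρ (Submodule.span A (Set.range gens)) :=
          Submodule.mem_map_of_mem hψu'
        rw [Submodule.map_span, ← Set.range_comp] at h1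
        apply Submodule.span_mono _ h1
        rintro _ ⟨pg, rfl⟩
        exact ⟨Sum.inr pg, rfl⟩
      have hw : χ (u - ρ (ψ u)) = 0 := by
        apply ψ_ker
        rw [map_sub, ψρ, sub_self]
      have hwspan : u - ρ (ψ u) ∈ Submodule.span A (Set.range genτ) := by
        have hwl : ∀ s : Fin nv →₀ ℕ, (u - ρ (ψ u)) (Sum.inl s) = 0 := by
          intro s
          rw [← χ_apply, hw]
          rfl
        rw [← Finsupp.sum_single (u - ρ (ψ u)), Finsupp.sum]
        apply Submodule.sum_mem
        intro t ht
        rcases t with s | j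
        · rw [hwl s, Finsupp.single_zero]
          exact Submodule.zero_mem _
        · have heq : Finsupp.single (Sum.inr j : (Fin nv →₀ ℕ) ⊕ ℕ) ((u - ρ (ψ u)) (Sum.inr j))
              = ((u - ρ (ψ u)) (Sum.inr j)) •
                Finsupp.single (Sum.inr j : (Fin nv →₀ ℕ) ⊕ ℕ) (1 : A) := by
            rw [Finsupp.smul_single, smul_eq_mul, mul_one]
          rw [heq]
          exact Submodule.smul_mem _ _ (Submodule.subset_span ⟨Sum.inl j, rfl⟩)
      have hu2 : u = (u - ρ (ψ u)) + ρ (ψ u) := by abel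
      rw [hu2]
      exact Submodule.add_mem _ hwspan hρψu
    · rw [Submodule.span_le]
      rintro _ ⟨t, rfl⟩
      rcases t with j | pg
      · rw [SetLike.mem_coe, LinearMap.mem_ker]
        show φ (Finsupp.single (Sum.inr j) 1) = 0
        rw [hφapp, hψapp, χ_single_inr, map_zero, map_zero]
      · rw [SetLike.mem_coe, LinearMap.mem_ker]
        show φ (ρ (gens pg)) = 0
        rw [hφapp, ψρ]
        exact M1' pg
  have hφs : Surjective φ := by
    intro x
    obtain ⟨y, hy⟩ := hfs x
    refine ⟨ρ y, ?_⟩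
    rw [hφapp, ψρ]
    exact hy
  -- reindex by ℕ
  obtain ⟨dτ⟩ := nonempty_denumerable ((Fin nv →₀ ℕ) ⊕ ℕ)
  let e : ℕ ≃ ((Fin nv →₀ ℕ) ⊕ ℕ) := (@Denumerable.eqv _ dτ).symm
  let E : (ℕ →₀ A) ≃ₗ[A] ((((Fin nv →₀ ℕ) ⊕ ℕ)) →₀ A) := Finsupp.domLCongr e
  -- surjection onto the generator index set
  obtain ⟨uW, huW⟩ := exists_surjective_nat (ℕ ⊕ ((Fin nv →₀ ℕ) × {x // x ∈ G}))
  refine ⟨φ ∘ₗ (E : (ℕ →₀ A) →ₗ[A] _), fun i => E.symm (genτ (uW i)), ?_, ?_⟩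
  · exact hφs.comp E.surjective
  · have hrange : Set.range (fun i => E.symm (genτ (uW i)))
        = ⇑E.symm '' Set.range genτ := by
      rw [show (fun i => E.symm (genτ (uW i))) = (⇑E.symm ∘ genτ) ∘ uW from rfl,
        huW.range_comp, Set.range_comp]
    calc Submodule.span A (Set.range fun i => E.symm (genτ (uW i)))
        = Submodule.span A (⇑E.symm '' Set.range genτ) := by rw [hrange]
      _ = Submodule.map (E.symm : _ →ₗ[A] _) (Submodule.span A (Set.range genτ)) := by
          rw [Submodule.map_span]
          simp only [LinearEquiv.coe_coe]
      _ = Submodule.map (E.symm : _ →ₗ[A] _) (LinearMap.ker φ) := by rw [ker_phi]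
      _ = Submodule.comap (E : _ →ₗ[A] _) (LinearMap.ker φ) := by
          ext x
          simp only [Submodule.mem_map, Submodule.mem_comap, LinearEquiv.coe_coe]
          constructor
          · rintro ⟨y, hy, rfl⟩
            simpa using hy
          · intro hx
            exact ⟨E x, hx, by simp⟩
      _ = LinearMap.ker (φ ∘ₗ (E : _ →ₗ[A] _)) := (LinearMap.ker_comp _ _).symm

end
end RG

/-- Raynaud–Gruson: Let `A` be a commutative ring and `B` a finitely presented
flat `A`-algebra. Then there are sets `I`, `J` and an exact sequence of `A`-modules
`0 → A^{(I)} → A^{(J)} → B → 0`, i.e. `B` has a free resolution of length 1. -/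
theorem stmt_12 (A B : Type) [CommRing A] [CommRing B] [Algebra A B]
    [Module.Flat A B] (hB : Algebra.FinitePresentation A B) :
    ∃ (I J : Type) (f : (I →₀ A) →ₗ[A] (J →₀ A)) (g : (J →₀ A) →ₗ[A] B),
      Function.Injective f ∧ Function.Surjective g ∧ LinearMap.ker g = LinearMap.range f := by
  obtain ⟨π, k, hπ, hk⟩ := RG.exists_presentation A B hB
  exact RG.main_module A B π k hπ hk
end
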